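/- (Projective triple quad formula) If U, V and W are nonzero vectors with a_U, a_V, a_W all nonzero that are linearly dependent (so the projective points [U], [V], [W] are collinear), then the projective quadrances q_w = q(U,V), q_u = q(V,W), q_v = q(U,W) satisfy (q_u + q_v + q_w)² = 2(q_u² + q_v² + q_w²) + 4·q_u·q_v·q_w. -/

import Mathlib

/-- The projective quadrance between the projective points `[U]` and `[V]`. -/
def projQuadrance {F : Type*} [Field F] {M : Type*} [AddCommGroup M] [Module F M]
    (B : LinearMap.BilinForm F M) (U V : M) : F :=
  1 - (B U V) ^ 2 / (B U U * B V V)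

/-- The projective spread between the projective lines `WU` and `WV`
(the spread at the vertex `[W]`). -/
def projSpread {F : Type*} [Field F] {M : Type*} [AddCommGroup M] [Module F M]
    (B : LinearMap.BilinForm F M) (W U V : M) : F :=
  1 - (B W W * B U V - B U W * B V W) ^ 2 /
      ((B U U * B W W - (B U W) ^ 2) * (B V V * B W W - (B V W) ^ 2))

lemma projQuadrance_comm {F : Type*} [Field F] {M : Type*} [AddCommGroup M] [Module F M]
    (B : LinearMap.BilinForm F M) (hsym : ∀ x y : M, B x y = B y x) (X Y : M) :
    projQuadrance B X Y = projQuadrance B Y X := by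
  unfold projQuadrance
  rw [hsym X Y, mul_comm]

lemma frac_id {F : Type*} [Field F] (N1 N2 N3 d : F) (hd : d ≠ 0)
    (h : (N1 + N2 + N3) ^ 2 * d = 2 * (N1 ^ 2 + N2 ^ 2 + N3 ^ 2) * d + 4 * (N1 * N2 * N3)) :
    (N1 / d + N2 / d + N3 / d) ^ 2 =
      2 * ((N1 / d) ^ 2 + (N2 / d) ^ 2 + (N3 / d) ^ 2) + 4 * (N1 / d) * (N2 / d) * (N3 / d) := by
  field_simp
  linear_combination h

set_option maxHeartbeats 4000000 in
lemma tqf_scalar {F : Type*} [Field F] (α β γ p q : F) (hα : α ≠ 0) (hγ : γ ≠ 0)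
    (hw : p * (p * α + q * β) + q * (p * β + q * γ) ≠ 0) :
    (1 - (p * β + q * γ) ^ 2 / (γ * (p * (p * α + q * β) + q * (p * β + q * γ))) +
        (1 - (p * α + q * β) ^ 2 / (α * (p * (p * α + q * β) + q * (p * β + q * γ)))) +
        (1 - β ^ 2 / (α * γ))) ^ 2 =
      2 * ((1 - (p * β + q * γ) ^ 2 / (γ * (p * (p * α + q * β) + q * (p * β + q * γ)))) ^ 2 +
          (1 - (p * α + q * β) ^ 2 / (α * (p * (p * α + q * β) + q * (p * β + q * γ)))) ^ 2 +
          (1 - β ^ 2 / (α * γ)) ^ 2) +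
        4 * (1 - (p * β + q * γ) ^ 2 / (γ * (p * (p * α + q * β) + q * (p * β + q * γ)))) *
          (1 - (p * α + q * β) ^ 2 / (α * (p * (p * α + q * β) + q * (p * β + q * γ)))) *
          (1 - β ^ 2 / (α * γ)) := by
  set w : F := p * (p * α + q * β) + q * (p * β + q * γ) with hwdef
  have hd : α * γ * w ^ 2 ≠ 0 :=
    mul_ne_zero (mul_ne_zero hα hγ) (pow_ne_zero 2 hw)
  have h1 : 1 - (p * β + q * γ) ^ 2 / (γ * w)
      = (p ^ 2 * α * ((α * γ - β ^ 2) * w)) / (α * γ * w ^ 2) := by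
    field_simp; rw [hwdef]; ring
  have h2 : 1 - (p * α + q * β) ^ 2 / (α * w)
      = (q ^ 2 * γ * ((α * γ - β ^ 2) * w)) / (α * γ * w ^ 2) := by
    field_simp; rw [hwdef]; ring
  have h3 : 1 - β ^ 2 / (α * γ)
      = ((α * γ - β ^ 2) * w ^ 2) / (α * γ * w ^ 2) := by
    field_simp
  rw [h1, h2, h3]
  apply frac_id _ _ _ _ hd
  rw [hwdef]
  ring

lemma tqf_aux {F : Type*} [Field F] {M : Type*} [AddCommGroup M] [Module F M]
    (B : LinearMap.BilinForm F M) (hsym : ∀ x y : M, B x y = B y x)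
    (U V : M) (p q : F)
    (haU : B U U ≠ 0) (haV : B V V ≠ 0)
    (haW : B (p • U + q • V) (p • U + q • V) ≠ 0) :
    (projQuadrance B V (p • U + q • V) + projQuadrance B U (p • U + q • V) +
        projQuadrance B U V) ^ 2 =
      2 * (projQuadrance B V (p • U + q • V) ^ 2 + projQuadrance B U (p • U + q • V) ^ 2 +
          projQuadrance B U V ^ 2) +
        4 * projQuadrance B V (p • U + q • V) * projQuadrance B U (p • U + q • V) *
          projQuadrance B U V := by
  have hb : B V U = B U V := hsym V U
  simp only [projQuadrance, map_add, map_smul, LinearMap.add_apply, LinearMap.smul_apply,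
    smul_eq_mul, hb] at haW ⊢
  exact tqf_scalar (B U U) (B U V) (B V V) p q haU haV haW

theorem projective_triple_quad_formula
    {F : Type*} [Field F] (hchar : (2 : F) ≠ 0)
    {M : Type*} [AddCommGroup M] [Module F M]
    (B : LinearMap.BilinForm F M) (hsym : ∀ x y : M, B x y = B y x)
    (U V W : M) (hU : U ≠ 0) (hV : V ≠ 0) (hW : W ≠ 0)
    (haU : B U U ≠ 0) (haV : B V V ≠ 0) (haW : B W W ≠ 0)
    (hdep : ∃ a b c : F, (a ≠ 0 ∨ b ≠ 0 ∨ c ≠ 0) ∧ a • U + b • V + c • W = 0) :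
    (projQuadrance B V W + projQuadrance B U W + projQuadrance B U V) ^ 2 =
      2 * (projQuadrance B V W ^ 2 + projQuadrance B U W ^ 2 + projQuadrance B U V ^ 2) +
        4 * projQuadrance B V W * projQuadrance B U W * projQuadrance B U V := by
  obtain ⟨a, b, c, h0, heq⟩ := hdep
  rcases h0 with ha | hb | hc
  · have h : U = (-(b/a)) • V + (-(c/a)) • W := by
      apply smul_right_injective M ha
      show a • U = a • (-(b/a) • V + -(c/a) • W)
      rw [smul_add, smul_smul, smul_smul]
      have e1 : a * (-(b/a)) = -b := by field_simp
      have e2 : a * (-(c/a)) = -c := by field_simp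
      rw [e1, e2, neg_smul, neg_smul, ← neg_add, eq_neg_iff_add_eq_zero]
      rw [← heq]; abel
    have key := tqf_aux B hsym V W (-(b/a)) (-(c/a)) haV haW (h ▸ haU)
    rw [← h] at key
    rw [projQuadrance_comm B hsym U W, projQuadrance_comm B hsym U V]
    linear_combination key
  · have h : V = (-(a/b)) • U + (-(c/b)) • W := by
      apply smul_right_injective M hb
      show b • V = b • (-(a/b) • U + -(c/b) • W)
      rw [smul_add, smul_smul, smul_smul]
      have e1 : b * (-(a/b)) = -a := by field_simp
      have e2 : b * (-(c/b)) = -c := by field_simp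
      rw [e1, e2, neg_smul, neg_smul, ← neg_add, eq_neg_iff_add_eq_zero]
      rw [← heq]; abel
    have key := tqf_aux B hsym U W (-(a/b)) (-(c/b)) haU haW (h ▸ haV)
    rw [← h] at key
    rw [projQuadrance_comm B hsym V W]
    linear_combination key
  · have h : W = (-(a/c)) • U + (-(b/c)) • V := by
      apply smul_right_injective M hc
      show c • W = c • (-(a/c) • U + -(b/c) • V)
      rw [smul_add, smul_smul, smul_smul]
      have e1 : c * (-(a/c)) = -a := by field_simp
      have e2 : c * (-(b/c)) = -b := by field_simp
      rw [e1, e2, neg_smul, neg_smul, ← neg_add, eq_neg_iff_add_eq_zero]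
      rw [← heq]; abel
    have key := tqf_aux B hsym U V (-(a/c)) (-(b/c)) haU haV (h ▸ haW)
    rw [← h] at key
    linear_combination key
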